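/- Let X be a Banach space, u ∈ C¹(ℝ; X) and σ > 0. Then u(0) = σ^{-1}∫₀^σ u(τ) dτ - ∫₀^σ t^{-2} ∫₀^t (u(t) - u(τ)) dτ dt, where the inner differences satisfy u(t)-u(τ) = ∫_τ^t u'(ξ) dξ and all integrals are Bochner integrals. -/

import Mathlib

open MeasureTheory intervalIntegral

/-- The averaging identity (going back to DiBenedetto): for a Banach space `X`,
`u ∈ C¹(ℝ; X)` and `σ > 0`,
`u(0) = σ⁻¹ ∫₀^σ u(τ) dτ - ∫₀^σ t⁻² ∫₀^t (u(t) - u(τ)) dτ dt`,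
where all integrals are Bochner integrals. -/
theorem averaging_identity
    {X : Type*} [NormedAddCommGroup X] [NormedSpace ℝ X] [CompleteSpace X]
    (u : ℝ → X) (hu : ContDiff ℝ 1 u) (σ : ℝ) (hσ : 0 < σ) :
    u 0 = σ⁻¹ • (∫ τ in (0:ℝ)..σ, u τ)
        - ∫ t in (0:ℝ)..σ, (t ^ 2)⁻¹ • (∫ τ in (0:ℝ)..t, (u t - u τ)) := by
  have hucont : Continuous u := hu.continuous
  set F : ℝ → X := fun t => ∫ τ in (0:ℝ)..t, u τ with hFdef
  have hFderiv : ∀ t : ℝ, HasDerivAt F (u t) t := fun t =>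
    (hucont.integral_hasStrictDerivAt 0 t).hasDerivAt
  have hinner : ∀ t : ℝ, (∫ τ in (0:ℝ)..t, (u t - u τ)) = t • u t - F t := by
    intro t
    rw [intervalIntegral.integral_sub intervalIntegrable_const
      (hucont.intervalIntegrable 0 t)]
    simp [hFdef]
  set g : ℝ → X := fun t => (t ^ 2)⁻¹ • (t • u t - F t) with hgdef
  -- derivative of G on (0,σ)
  set G : ℝ → X := fun t => t⁻¹ • F t with hGdef
  have hGderiv : ∀ t ∈ Set.Ioo (0:ℝ) σ, HasDerivAt G (g t) t := by
    intro t ht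
    have hne : t ≠ 0 := ne_of_gt ht.1
    have h1 : HasDerivAt (fun s : ℝ => s⁻¹) (-(t ^ 2)⁻¹) t := hasDerivAt_inv hne
    have h2 := h1.smul (hFderiv t)
    convert h2 using 1
    · rfl
    have hsc : (t ^ 2)⁻¹ * t = t⁻¹ := by
      rw [sq]; field_simp
    rw [hgdef]
    simp only [smul_sub, smul_smul, hsc, neg_smul]
    abel
  -- bound on g
  obtain ⟨L, hL⟩ := (isCompact_Icc (a := (0:ℝ)) (b := σ)).exists_bound_of_continuousOn
    ((hu.continuous_deriv le_rfl).continuousOn)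
  have hLnn : 0 ≤ L := le_trans (norm_nonneg _) (hL 0 (Set.left_mem_Icc.2 hσ.le))
  have hlip : ∀ a ∈ Set.Icc (0:ℝ) σ, ∀ b ∈ Set.Icc (0:ℝ) σ, ‖u a - u b‖ ≤ L * |a - b| := by
    intro a ha b hb
    have := Convex.norm_image_sub_le_of_norm_hasDerivWithin_le
      (f := u) (f' := deriv u) (C := L) (s := Set.Icc (0:ℝ) σ)
      (fun x _ => ((hu.differentiable one_ne_zero) x).hasDerivAt.hasDerivWithinAt)
      (fun x hx => hL x hx) (convex_Icc 0 σ) hb ha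
    simpa [Real.norm_eq_abs] using this
  have hgbound : ∀ t ∈ Set.Ioc (0:ℝ) σ, ‖g t‖ ≤ L := by
    intro t ht
    have ht0 : 0 < t := ht.1
    have hmem : t ∈ Set.Icc (0:ℝ) σ := ⟨ht0.le, ht.2⟩
    have hb : ∀ τ ∈ Set.uIoc (0:ℝ) t, ‖u t - u τ‖ ≤ L * t := by
      intro τ hτ
      rw [Set.uIoc_of_le ht0.le] at hτ
      have hτmem : τ ∈ Set.Icc (0:ℝ) σ := ⟨hτ.1.le, hτ.2.trans ht.2⟩
      calc ‖u t - u τ‖ ≤ L * |t - τ| := hlip t hmem τ hτmem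
        _ ≤ L * t := by
            apply mul_le_mul_of_nonneg_left _ hLnn
            rw [abs_of_nonneg (by linarith [hτ.1, hτ.2])]
            linarith [hτ.1]
    have hnormint : ‖∫ τ in (0:ℝ)..t, (u t - u τ)‖ ≤ L * t * |t - 0| :=
      intervalIntegral.norm_integral_le_of_norm_le_const hb
    rw [sub_zero, abs_of_nonneg ht0.le] at hnormint
    have : ‖g t‖ = (t ^ 2)⁻¹ * ‖∫ τ in (0:ℝ)..t, (u t - u τ)‖ := by
      rw [hgdef]
      simp only [← hinner t]
      rw [norm_smul, Real.norm_eq_abs, abs_of_nonneg (by positivity)]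
    rw [this]
    calc (t ^ 2)⁻¹ * ‖∫ τ in (0:ℝ)..t, (u t - u τ)‖
        ≤ (t ^ 2)⁻¹ * (L * t * t) := by
          apply mul_le_mul_of_nonneg_left hnormint (by positivity)
      _ = L := by field_simp [sq]
  -- integrability of g
  have hFcont : Continuous F := by
    exact continuous_iff_continuousAt.2 fun t => (hFderiv t).continuousAt
  have hgcont : ContinuousOn g (Set.Ioc (0:ℝ) σ) := by
    apply ContinuousOn.smul
    · exact ((continuousOn_id.pow 2).inv₀ fun t ht => pow_ne_zero 2 (ne_of_gt ht.1))
    · exact ((continuousOn_id.smul hucont.continuousOn).sub hFcont.continuousOn)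
  have hgint : IntervalIntegrable g volume (0:ℝ) σ := by
    rw [intervalIntegrable_iff_integrableOn_Ioc_of_le hσ.le]
    refine ⟨hgcont.aestronglyMeasurable measurableSet_Ioc, ?_⟩
    exact MeasureTheory.HasFiniteIntegral.restrict_of_bounded (C := L) measure_Ioc_lt_top
      ((ae_restrict_iff' measurableSet_Ioc).2 (Filter.Eventually.of_forall hgbound))
  -- limits of G at the endpoints
  have h0 : Filter.Tendsto G (nhdsWithin 0 (Set.Ioi 0)) (nhds (u 0)) := by
    have hslope := hasDerivAt_iff_tendsto_slope.1 (hFderiv 0)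
    have heq : ∀ t : ℝ, slope F 0 t = G t := by
      intro t
      simp [slope_def_module, hGdef, hFdef]
    refine Filter.Tendsto.congr heq ?_
    exact hslope.mono_left (nhdsWithin_mono 0 fun x hx => ne_of_gt hx)
  have hσtend : Filter.Tendsto G (nhdsWithin σ (Set.Iio σ)) (nhds (σ⁻¹ • F σ)) := by
    have : ContinuousAt G σ :=
      ((continuousAt_id.inv₀ hσ.ne').smul hFcont.continuousAt)
    exact this.continuousWithinAt.tendsto
  have key := intervalIntegral.integral_eq_sub_of_hasDerivAt_of_tendsto hσ hGderiv hgint h0 hσtend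
  simp only [hinner]
  rw [show (fun t => (t^2)⁻¹ • (t • u t - F t)) = g from rfl] at key ⊢
  rw [key]
  abel
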